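/- arXiv:1906.08073 — 3 statements merged into one kernel-verified Lean document; each statement's English description precedes it below -/
import Mathlib

section
/- Let d ≥ 1, ε > 0, and let Ψ satisfy the kernel assumptions. Let f : ℝ^d×ℝ² → [0,∞) be measurable and compactly supported with f ∈ L¹∩L^∞, with macroscopic density ρ(x) := ∫ f(x,v,w) dv dw and mean potential V(x) defined by ρV = ∫ v f dv dw where ρ(x) > 0 and V(x) = 0 where ρ(x) = 0. Then the following identity holds: (1/2)∬ Ψ_ε(‖x−x'‖)|v−v'|² f(x,v,w) f(x',v',w') dx dv dw dx' dv' dw' = ∫ (Ψ_ε(‖·‖)∗ρ)(x) (∫ |v−V(x)|² f(x,v,w) dv dw) dx + (1/2)∬ Ψ_ε(‖x−x'‖)|V(x)−V(x')|² ρ(x)ρ(x') dx dx'. -/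
open MeasureTheory Real Filter Topology
open scoped RealInnerProductSpace

noncomputable section

abbrev Rd (d : ℕ) := EuclideanSpace ℝ (Fin d)

/-- The cubic FitzHugh–Nagumo nonlinearity `N(v) = v (1-v) (v-a)`. -/
def Ncube (a v : ℝ) : ℝ := v * (1 - v) * (v - a)

/-- Rescaled connectivity kernel `Ψ_ε(r) = ε^{-d} Ψ(r/ε)`. -/
def psiEps (d : ℕ) (Ψ : ℝ → ℝ) (ε r : ℝ) : ℝ := (ε ^ d)⁻¹ * Ψ (r / ε)

/-- The nonlocal interaction term `K_ε[g](x,v)`. -/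
def Kker (d : ℕ) (Ψ : ℝ → ℝ) (ε : ℝ) (g : Rd d → ℝ → ℝ → ℝ) (x : Rd d) (v : ℝ) : ℝ :=
  (ε ^ 2)⁻¹ * ∫ x' : Rd d, ∫ v' : ℝ, ∫ w' : ℝ, psiEps d Ψ ε ‖x - x'‖ * (v - v') * g x' v' w'

/-- Partial derivative of `g` in the `i`-th coordinate direction. -/
def pdAt {d : ℕ} (g : Rd d → ℝ) (i : Fin d) (x : Rd d) : ℝ :=
  fderiv ℝ g x (EuclideanSpace.single i (1 : ℝ))

/-- Laplacian of `g`. -/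
def lapl {d : ℕ} (g : Rd d → ℝ) (x : Rd d) : ℝ := ∑ i, pdAt (pdAt g i) i x

/-- Macroscopic density associated to a kinetic density `g`. -/
def rhoOf (d : ℕ) (g : Rd d → ℝ → ℝ → ℝ) (x : Rd d) : ℝ := ∫ v : ℝ, ∫ w : ℝ, g x v w

/-- Macroscopic mean membrane potential associated to a kinetic density `g`. -/
def VOf (d : ℕ) (g : Rd d → ℝ → ℝ → ℝ) (x : Rd d) : ℝ :=
  if rhoOf d g x = 0 then 0 else (∫ v : ℝ, ∫ w : ℝ, v * g x v w) / rhoOf d g x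

/-- Macroscopic mean adaptation variable associated to a kinetic density `g`. -/
def WOf (d : ℕ) (g : Rd d → ℝ → ℝ → ℝ) (x : Rd d) : ℝ :=
  if rhoOf d g x = 0 then 0 else (∫ v : ℝ, ∫ w : ℝ, w * g x v w) / rhoOf d g x

/-! ### Auxiliary definitions and lemmas for stmt5 -/

/-- First moment in `v` of a kinetic density. -/
def mOf (d : ℕ) (g : Rd d → ℝ → ℝ → ℝ) (x : Rd d) : ℝ := ∫ v : ℝ, v * ∫ w : ℝ, g x v w

/-- Second moment in `v` of a kinetic density. -/
def qOf (d : ℕ) (g : Rd d → ℝ → ℝ → ℝ) (x : Rd d) : ℝ := ∫ v : ℝ, v ^ 2 * ∫ w : ℝ, g x v w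

/-- Auxiliary product `V·m`. -/
def tOf (d : ℕ) (g : Rd d → ℝ → ℝ → ℝ) (x : Rd d) : ℝ := VOf d g x * mOf d g x

/-- Convolution-type operator. -/
def convK {d : ℕ} (K u : Rd d → ℝ) (x : Rd d) : ℝ := ∫ x' : Rd d, K (x - x') * u x'

private lemma seg_integrable {h : ℝ → ℝ} (hm : AEStronglyMeasurable h volume) {C R : ℝ}
    (hb : ∀ v, |h v| ≤ C) (hs : ∀ v : ℝ, R < |v| → h v = 0) : Integrable h := by
  have hind : Integrable ((Set.Icc (-R) R).indicator fun _ => C) := by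
    rw [integrable_indicator_iff measurableSet_Icc]
    exact integrableOn_const (by simp [Real.volume_Icc])
  refine Integrable.mono' hind hm (Eventually.of_forall fun v => ?_)
  by_cases hv : v ∈ Set.Icc (-R) R
  · rw [Set.indicator_of_mem hv]; simpa [Real.norm_eq_abs] using hb v
  · rw [Set.indicator_of_notMem hv]
    have habs : R < |v| := by
      rw [lt_abs]
      by_contra hcon
      push_neg at hcon
      exact hv (Set.mem_Icc.mpr ⟨by linarith [hcon.2], hcon.1⟩)
    simp [hs v habs]

private lemma seg_bound {h : ℝ → ℝ} (hm : AEStronglyMeasurable h volume) {C R : ℝ}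
    (hb : ∀ v, |h v| ≤ C) (hs : ∀ v : ℝ, R < |v| → h v = 0) :
    |∫ v, h v| ≤ C * (volume (Set.Icc (-R) R)).toReal := by
  have hint := seg_integrable hm hb hs
  have hind : Integrable ((Set.Icc (-R) R).indicator fun _ => C) := by
    rw [integrable_indicator_iff measurableSet_Icc]
    exact integrableOn_const (by simp [Real.volume_Icc])
  have h1 : |∫ v, h v| ≤ ∫ v, |h v| := by
    simpa [Real.norm_eq_abs] using norm_integral_le_integral_norm h
  have h2 : (∫ v, |h v|) ≤ ∫ v, (Set.Icc (-R) R).indicator (fun _ => C) v := by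
    refine integral_mono hint.abs hind fun v => ?_
    by_cases hv : v ∈ Set.Icc (-R) R
    · rw [Set.indicator_of_mem hv]; exact hb v
    · rw [Set.indicator_of_notMem hv]
      have habs : R < |v| := by
        rw [lt_abs]
        by_contra hcon
        push_neg at hcon
        exact hv (Set.mem_Icc.mpr ⟨by linarith [hcon.2], hcon.1⟩)
      simp [hs v habs]
  have h3 : (∫ v, (Set.Icc (-R) R).indicator (fun _ => C) v)
      = (volume (Set.Icc (-R) R)).toReal * C := by
    rw [integral_indicator_const]
    · simp [smul_eq_mul, ENNReal.toReal_ofReal']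
    · exact measurableSet_Icc
  calc |∫ v, h v| ≤ _ := h1.trans (h2.trans_eq h3)
  _ = C * (volume (Set.Icc (-R) R)).toReal := mul_comm _ _

private lemma rect_integrable {h : ℝ × ℝ → ℝ} (hm : AEStronglyMeasurable h volume) {C R : ℝ}
    (hb : ∀ p, |h p| ≤ C) (hs : ∀ p : ℝ × ℝ, R < |p.1| ∨ R < |p.2| → h p = 0) :
    Integrable h := by
  have hsm : MeasurableSet (Set.Icc (-R) R ×ˢ Set.Icc (-R) R : Set (ℝ × ℝ)) :=
    measurableSet_Icc.prod measurableSet_Icc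
  have hvol : volume (Set.Icc (-R) R ×ˢ Set.Icc (-R) R : Set (ℝ × ℝ)) < ⊤ := by
    rw [Measure.volume_eq_prod, Measure.prod_prod]
    exact ENNReal.mul_lt_top (by simp [Real.volume_Icc]) (by simp [Real.volume_Icc])
  have hind : Integrable ((Set.Icc (-R) R ×ˢ Set.Icc (-R) R : Set (ℝ × ℝ)).indicator
      fun _ => C) := by
    rw [integrable_indicator_iff hsm]
    exact integrableOn_const hvol.ne
  refine Integrable.mono' hind hm (Eventually.of_forall fun p => ?_)
  by_cases hp : p ∈ (Set.Icc (-R) R ×ˢ Set.Icc (-R) R : Set (ℝ × ℝ))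
  · rw [Set.indicator_of_mem hp]; simpa [Real.norm_eq_abs] using hb p
  · rw [Set.indicator_of_notMem hp]
    have habs : R < |p.1| ∨ R < |p.2| := by
      rw [Set.mem_prod] at hp
      rcases not_and_or.mp hp with h | h
      · left
        rw [lt_abs]
        by_contra hcon
        push_neg at hcon
        exact h (Set.mem_Icc.mpr ⟨by linarith [hcon.2], hcon.1⟩)
      · right
        rw [lt_abs]
        by_contra hcon
        push_neg at hcon
        exact h (Set.mem_Icc.mpr ⟨by linarith [hcon.2], hcon.1⟩)
    simp [hs p habs]

/-- decomposition of the kernel dissipation into an internal part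
weighted by `Ψ_ε∗ρ` and a macroscopic part. -/
theorem stmt5 (d : ℕ) (hd : 1 ≤ d) (ε : ℝ) (hε : 0 < ε) (Ψ : ℝ → ℝ) (σ : ℝ)
    (hΨpos : ∀ᵐ r ∂(volume.restrict (Set.Ici (0 : ℝ))), 0 < Ψ r)
    (hΨint : Integrable fun y : Rd d => Ψ ‖y‖)
    (hΨ1 : (∫ y : Rd d, Ψ ‖y‖) = 1)
    (hσint : Integrable fun y : Rd d => Ψ ‖y‖ * ‖y‖ ^ 2)
    (hσdef : σ = (1 / 2) * ∫ y : Rd d, Ψ ‖y‖ * ‖y‖ ^ 2)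
    (hσpos : 0 < σ)
    (f : Rd d → ℝ → ℝ → ℝ)
    (hmeas : Measurable fun q : Rd d × ℝ × ℝ => f q.1 q.2.1 q.2.2)
    (hnn : ∀ x v w, 0 ≤ f x v w)
    (hsupp : HasCompactSupport fun q : Rd d × ℝ × ℝ => f q.1 q.2.1 q.2.2)
    (hint : Integrable fun q : Rd d × ℝ × ℝ => f q.1 q.2.1 q.2.2)
    (hbdd : ∃ B, ∀ x v w, f x v w ≤ B) :
    (1 / 2) * (∫ x : Rd d, ∫ v : ℝ, ∫ w : ℝ, ∫ x' : Rd d, ∫ v' : ℝ, ∫ w' : ℝ,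
        psiEps d Ψ ε ‖x - x'‖ * (v - v') ^ 2 * f x v w * f x' v' w')
      = (∫ x : Rd d, (∫ x' : Rd d, psiEps d Ψ ε ‖x - x'‖ * rhoOf d f x')
            * ∫ v : ℝ, ∫ w : ℝ, (v - VOf d f x) ^ 2 * f x v w)
        + (1 / 2) * ∫ x : Rd d, ∫ x' : Rd d,
            psiEps d Ψ ε ‖x - x'‖ * (VOf d f x - VOf d f x') ^ 2
              * rhoOf d f x * rhoOf d f x' := by
  classical
  obtain ⟨B₀, hB₀⟩ := hbdd
  have hB : ∀ x v w, f x v w ≤ max B₀ 0 := fun x v w => (hB₀ x v w).trans (le_max_left _ _)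
  have hB0 : (0 : ℝ) ≤ max B₀ 0 := le_max_right _ _
  have hfabs : ∀ x v w, |f x v w| ≤ max B₀ 0 := fun x v w => by
    rw [abs_of_nonneg (hnn x v w)]; exact hB x v w
  -- support radius
  obtain ⟨R₀, hR₀⟩ := hsupp.isCompact.isBounded.subset_closedBall 0
  have hR1 : (0 : ℝ) < max R₀ 1 := lt_of_lt_of_le one_pos (le_max_right _ _)
  have hRsupp : ∀ x v w, f x v w ≠ 0 → |v| ≤ max R₀ 1 ∧ |w| ≤ max R₀ 1 := by
    intro x v w h
    have hmem : (x, v, w) ∈ Metric.closedBall (0 : Rd d × ℝ × ℝ) R₀ :=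
      hR₀ (subset_closure (by exact h))
    rw [Metric.mem_closedBall, dist_zero_right, Prod.norm_def, Prod.norm_def] at hmem
    have h1 : ‖v‖ ≤ R₀ := le_trans (le_max_left _ _) (le_trans (le_max_right _ _) hmem)
    have h2 : ‖w‖ ≤ R₀ := le_trans (le_max_right _ _) (le_trans (le_max_right _ _) hmem)
    rw [Real.norm_eq_abs] at h1 h2
    exact ⟨h1.trans (le_max_left _ _), h2.trans (le_max_left _ _)⟩
  set B : ℝ := max B₀ 0 with hBdef
  set R : ℝ := max R₀ 1 with hRdef
  set lenR : ℝ := (volume (Set.Icc (-R) R)).toReal with hlendef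
  have hlen0 : 0 ≤ lenR := ENNReal.toReal_nonneg
  -- slice measurability
  have hfm : ∀ x, Measurable fun p : ℝ × ℝ => f x p.1 p.2 :=
    fun x => hmeas.comp measurable_prodMk_left
  have hfvm : ∀ x v, Measurable fun w : ℝ => f x v w :=
    fun x v => (hfm x).comp measurable_prodMk_left
  have hgm : ∀ x, StronglyMeasurable fun v : ℝ => ∫ w, f x v w :=
    fun x => (hfm x).stronglyMeasurable.integral_prod_right'
  -- slices in w
  have hwint : ∀ x v, Integrable fun w => f x v w := by
    intro x v
    refine seg_integrable (hfvm x v).aestronglyMeasurable (C := B) (R := R)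
      (fun w => hfabs x v w) fun w hw => ?_
    by_contra h
    exact absurd ((hRsupp x v w h).2) (not_le.mpr hw)
  have hgnn : ∀ x v, 0 ≤ ∫ w, f x v w := fun x v => integral_nonneg (hnn x v)
  have hgbd : ∀ x v, |∫ w, f x v w| ≤ B * lenR := by
    intro x v
    refine seg_bound (hfvm x v).aestronglyMeasurable (fun w => hfabs x v w) fun w hw => ?_
    by_contra h
    exact absurd ((hRsupp x v w h).2) (not_le.mpr hw)
  have hgsupp : ∀ x v, R < |v| → (∫ w, f x v w) = 0 := by
    intro x v hv
    have : ∀ w, f x v w = 0 := by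
      intro w
      by_contra h
      exact absurd ((hRsupp x v w h).1) (not_le.mpr hv)
    simp [this]
  -- moments in v : integrability
  have hgint : ∀ x, Integrable fun v => ∫ w, f x v w := by
    intro x
    refine seg_integrable (hgm x).aestronglyMeasurable (C := B * lenR) (R := R)
      (hgbd x) (hgsupp x)
  have hg1int : ∀ x, Integrable fun v => v * ∫ w, f x v w := by
    intro x
    refine seg_integrable (R := R) (C := R * (B * lenR))
      ((measurable_id.mul (hgm x).measurable).aestronglyMeasurable) (fun v => ?_) fun v hv => by
        simp [hgsupp x v hv]
    rcases le_or_gt |v| R with h | h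
    · rw [abs_mul]
      exact mul_le_mul h (hgbd x v) (abs_nonneg _) (le_of_lt hR1)
    · simp only [hgsupp x v h, mul_zero, abs_zero]
      positivity
  have hg2int : ∀ x, Integrable fun v => v ^ 2 * ∫ w, f x v w := by
    intro x
    refine seg_integrable (R := R) (C := R ^ 2 * (B * lenR))
      (((measurable_id.pow_const 2).mul (hgm x).measurable).aestronglyMeasurable)
      (fun v => ?_) fun v hv => by simp [hgsupp x v hv]
    rcases le_or_gt |v| R with h | h
    · rw [abs_mul, abs_pow]
      exact mul_le_mul (pow_le_pow_left₀ (abs_nonneg _) h 2) (hgbd x v) (abs_nonneg _)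
        (by positivity)
    · simp only [hgsupp x v h, mul_zero, abs_zero]
      positivity
  -- basic facts about rho
  have hρnn : ∀ x, 0 ≤ rhoOf d f x := fun x => integral_nonneg fun v => hgnn x v
  have hρbd : ∀ x, |rhoOf d f x| ≤ B * lenR * lenR := by
    intro x
    exact seg_bound (hgm x).aestronglyMeasurable (hgbd x) (hgsupp x)
  have hmbd : ∀ x, |mOf d f x| ≤ R * (B * lenR) * lenR := by
    intro x
    refine seg_bound (h := fun v => v * ∫ w, f x v w)
      ((measurable_id.mul (hgm x).measurable).aestronglyMeasurable)
      (fun v => ?_) fun v hv => by simp [hgsupp x v hv]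
    rcases le_or_gt |v| R with h | h
    · rw [abs_mul]
      exact mul_le_mul h (hgbd x v) (abs_nonneg _) (le_of_lt hR1)
    · simp only [hgsupp x v h, mul_zero, abs_zero]
      positivity
  have hQbd : ∀ x, |qOf d f x| ≤ R ^ 2 * (B * lenR) * lenR := by
    intro x
    refine seg_bound (h := fun v => v ^ 2 * ∫ w, f x v w)
      (((measurable_id.pow_const 2).mul (hgm x).measurable).aestronglyMeasurable)
      (fun v => ?_) fun v hv => by simp [hgsupp x v hv]
    rcases le_or_gt |v| R with h | h
    · rw [abs_mul, abs_pow]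
      exact mul_le_mul (pow_le_pow_left₀ (abs_nonneg _) h 2) (hgbd x v) (abs_nonneg _)
        (by positivity)
    · simp only [hgsupp x v h, mul_zero, abs_zero]
      positivity
  have hmabs : ∀ x, |mOf d f x| ≤ R * rhoOf d f x := by
    intro x
    have h1 : |mOf d f x| ≤ ∫ v, |v * ∫ w, f x v w| := by
      rw [show mOf d f x = ∫ v, v * ∫ w, f x v w from rfl]
      calc |∫ v, v * ∫ w, f x v w| = ‖∫ v, v * ∫ w, f x v w‖ := (Real.norm_eq_abs _).symm
      _ ≤ ∫ v, ‖v * ∫ w, f x v w‖ := norm_integral_le_integral_norm _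
      _ = ∫ v, |v * ∫ w, f x v w| := by simp only [Real.norm_eq_abs]
    have h2 : (∫ v, |v * ∫ w, f x v w|) ≤ ∫ v, R * ∫ w, f x v w := by
      refine integral_mono (hg1int x).abs ((hgint x).const_mul R) fun v => ?_
      rcases le_or_gt |v| R with h | h
      · rw [abs_mul, abs_of_nonneg (hgnn x v)]
        exact mul_le_mul_of_nonneg_right h (hgnn x v)
      · simp [hgsupp x v h]
    calc |mOf d f x| ≤ ∫ v, R * ∫ w, f x v w := h1.trans h2
    _ = R * rhoOf d f x := integral_const_mul R _
  -- measurability and integrability of rho, m, Q over Rd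
  have hbig : ∀ n : ℕ, Measurable fun q : Rd d × ℝ × ℝ => q.2.1 ^ n * f q.1 q.2.1 q.2.2 :=
    fun n => ((measurable_fst.comp measurable_snd).pow_const n).mul hmeas
  have hbigint : ∀ n : ℕ, Integrable fun q : Rd d × ℝ × ℝ => q.2.1 ^ n * f q.1 q.2.1 q.2.2 := by
    intro n
    refine Integrable.mono' (hint.const_mul (R ^ n)) (hbig n).aestronglyMeasurable
      (Eventually.of_forall fun q => ?_)
    rcases eq_or_ne (f q.1 q.2.1 q.2.2) 0 with h | h
    · simp [h]
    · have hv := (hRsupp _ _ _ h).1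
      rw [Real.norm_eq_abs, abs_mul, abs_pow, abs_of_nonneg (hnn _ _ _)]
      exact mul_le_mul_of_nonneg_right (pow_le_pow_left₀ (abs_nonneg _) hv n)
        (hnn _ _ _)
  have hsliceint : ∀ (x : Rd d) (n : ℕ),
      Integrable fun p : ℝ × ℝ => p.1 ^ n * f x p.1 p.2 := by
    intro x n
    refine rect_integrable (R := R) (C := R ^ n * B)
      (((measurable_fst.pow_const n).mul (hfm x)).aestronglyMeasurable) (fun p => ?_)
      (fun p hp => ?_)
    · rcases eq_or_ne (f x p.1 p.2) 0 with h | h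
      · simp [h]; positivity
      · have hv := (hRsupp _ _ _ h).1
        rw [abs_mul, abs_pow]
        exact mul_le_mul (pow_le_pow_left₀ (abs_nonneg _) hv n) (hfabs _ _ _)
          (abs_nonneg _) (by positivity)
    · rcases eq_or_ne (f x p.1 p.2) 0 with h | h
      · simp [h]
      · rcases hp with hp | hp
        · exact absurd (hRsupp _ _ _ h).1 (not_le.mpr hp)
        · exact absurd (hRsupp _ _ _ h).2 (not_le.mpr hp)
  have hmomprod : ∀ (x : Rd d) (n : ℕ),
      (∫ p : ℝ × ℝ, p.1 ^ n * f x p.1 p.2) = ∫ v, v ^ n * ∫ w, f x v w := by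
    intro x n
    have h := hsliceint x n
    rw [Measure.volume_eq_prod] at h
    rw [show (volume : Measure (ℝ × ℝ)) = (volume : Measure ℝ).prod volume from
      Measure.volume_eq_prod ℝ ℝ, integral_prod _ h]
    simp only [integral_const_mul]
  -- rewrite rho m Q as marginals of product integrals
  have hρrepr : rhoOf d f = fun x => ∫ p : ℝ × ℝ, p.1 ^ 0 * f x p.1 p.2 := by
    funext x
    rw [hmomprod x 0]
    simp [rhoOf]
  have hmrepr : mOf d f = fun x => ∫ p : ℝ × ℝ, p.1 ^ 1 * f x p.1 p.2 := by
    funext x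
    rw [hmomprod x 1]
    simp [mOf]
  have hQrepr : qOf d f = fun x => ∫ p : ℝ × ℝ, p.1 ^ 2 * f x p.1 p.2 := by
    funext x
    rw [hmomprod x 2]
    simp [qOf]
  have hmargm : ∀ n : ℕ, StronglyMeasurable fun x : Rd d =>
      ∫ p : ℝ × ℝ, p.1 ^ n * f x p.1 p.2 :=
    fun n => (hbig n).stronglyMeasurable.integral_prod_right'
  have hmargint : ∀ n : ℕ, Integrable fun x : Rd d =>
      ∫ p : ℝ × ℝ, p.1 ^ n * f x p.1 p.2 := by
    intro n
    have h := hbigint n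
    rw [Measure.volume_eq_prod] at h
    exact h.integral_prod_left
  have hρm : Measurable (rhoOf d f) := by rw [hρrepr]; exact (hmargm 0).measurable
  have hmm : Measurable (mOf d f) := by rw [hmrepr]; exact (hmargm 1).measurable
  have hQm : Measurable (qOf d f) := by rw [hQrepr]; exact (hmargm 2).measurable
  have hρint : Integrable (rhoOf d f) := by rw [hρrepr]; exact hmargint 0
  have hmint : Integrable (mOf d f) := by rw [hmrepr]; exact hmargint 1
  have hQint : Integrable (qOf d f) := by rw [hQrepr]; exact hmargint 2
  -- V and T facts
  have hVdef : ∀ x, VOf d f x = if rhoOf d f x = 0 then 0 else mOf d f x / rhoOf d f x := by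
    intro x
    have : (∫ v : ℝ, ∫ w : ℝ, v * f x v w) = mOf d f x := by
      simp only [mOf, integral_const_mul]
    rw [VOf, this]
  have hVm : Measurable (VOf d f) := by
    rw [funext hVdef]
    exact Measurable.ite (hρm (measurableSet_singleton 0)) measurable_const (hmm.div hρm)
  have hVbd : ∀ x, |VOf d f x| ≤ R := by
    intro x
    rw [hVdef x]
    split_ifs with h
    · simpa using le_of_lt hR1
    · have hρpos : 0 < rhoOf d f x := lt_of_le_of_ne (hρnn x) (Ne.symm h)
      rw [abs_div, abs_of_pos hρpos, div_le_iff₀ hρpos]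
      exact hmabs x
  have hVρ : ∀ x, VOf d f x * rhoOf d f x = mOf d f x := by
    intro x
    rw [hVdef x]
    split_ifs with h
    · have : |mOf d f x| ≤ 0 := by simpa [h] using hmabs x
      have hm0 : mOf d f x = 0 := abs_eq_zero.mp (le_antisymm this (abs_nonneg _))
      simp [h, hm0]
    · field_simp
  have hTm : Measurable (tOf d f) := hVm.mul hmm
  have hTbd : ∀ x, |tOf d f x| ≤ R * (R * (B * lenR) * lenR) := by
    intro x
    rw [show tOf d f x = VOf d f x * mOf d f x from rfl, abs_mul]
    exact mul_le_mul (hVbd x) (hmbd x) (abs_nonneg _) (le_of_lt hR1)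
  have hTint : Integrable (tOf d f) := by
    refine (hmint.bdd_mul (c := R) hVm.aestronglyMeasurable (Eventually.of_forall fun x => ?_))
    simpa [Real.norm_eq_abs] using hVbd x
  -- the symmetrized measurable kernel K
  obtain ⟨K, hKm, hKint, hKeven, hKae⟩ : ∃ K : Rd d → ℝ, Measurable K ∧ Integrable K ∧
      (∀ y, K (-y) = K y) ∧ K =ᵐ[volume] fun y : Rd d => psiEps d Ψ ε ‖y‖ := by
    have hGint : Integrable (fun y : Rd d => psiEps d Ψ ε ‖y‖) := by
      have h1 : Integrable (fun y : Rd d => Ψ ‖ε⁻¹ • y‖) :=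
        (integrable_comp_smul_iff volume (fun y : Rd d => Ψ ‖y‖) (inv_ne_zero hε.ne')).2 hΨint
      refine ((h1.const_mul ((ε ^ d)⁻¹)).congr (Eventually.of_forall fun y => ?_))
      simp only [psiEps]
      rw [norm_smul, Real.norm_eq_abs, abs_of_pos (inv_pos.mpr hε), div_eq_inv_mul]
    obtain ⟨G₁, hG₁sm, hG₁ae⟩ := hGint.aestronglyMeasurable
    have hnegqmp : Filter.Tendsto (fun y : Rd d => -y) (ae volume) (ae volume) :=
      (Measure.measurePreserving_neg (volume : Measure (Rd d))).quasiMeasurePreserving.tendsto_ae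
    have hG₁negae : (fun y : Rd d => G₁ (-y)) =ᵐ[volume]
        fun y : Rd d => psiEps d Ψ ε ‖y‖ := by
      have h1 : (fun y : Rd d => G₁ (-y)) =ᵐ[volume] fun y => psiEps d Ψ ε ‖(-y)‖ :=
        (hG₁ae.symm.comp_tendsto hnegqmp : _)
      refine h1.trans (Eventually.of_forall fun y => ?_)
      simp only [norm_neg]
    have hKae : (fun y : Rd d => (G₁ y + G₁ (-y)) / 2) =ᵐ[volume]
        fun y : Rd d => psiEps d Ψ ε ‖y‖ := by
      filter_upwards [hG₁ae, hG₁negae] with y h1 h2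
      linarith [h1, h2]
    refine ⟨fun y => (G₁ y + G₁ (-y)) / 2,
      ((hG₁sm.measurable).add ((hG₁sm.measurable).comp measurable_neg)).div_const 2,
      hGint.congr hKae.symm, fun y => by simp [neg_neg, add_comm], hKae⟩
  have hKsub : ∀ x x' : Rd d, K (x - x') = K (x' - x) := by
    intro x x'
    rw [← hKeven (x' - x), neg_sub]
  have hKshift : ∀ x : Rd d,
      (fun x' => psiEps d Ψ ε ‖x - x'‖) =ᵐ[volume] fun x' => K (x - x') := by
    intro x
    have hmp : MeasurePreserving (fun x' : Rd d => x - x') volume volume :=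
      Measure.measurePreserving_sub_left volume x
    have h1 : (fun x' : Rd d => K (x - x')) =ᵐ[volume]
        fun x' => psiEps d Ψ ε ‖x - x'‖ :=
      (hKae.comp_tendsto hmp.quasiMeasurePreserving.tendsto_ae : _)
    exact h1.symm
  have hKcomp : ∀ x : Rd d, Integrable fun x' => K (x - x') := fun x => hKint.comp_sub_left x
  -- integrability of kernel products
  have hKmul : ∀ u : Rd d → ℝ, Measurable u → (∃ C, ∀ y, |u y| ≤ C) →
      ∀ x, Integrable fun x' => K (x - x') * u x' := by
    intro u hum hC x
    obtain ⟨C, hC⟩ := hC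
    have h := (hKcomp x).bdd_mul hum.aestronglyMeasurable
      (c := C) (Eventually.of_forall fun y => by simpa [Real.norm_eq_abs] using hC y)
    exact h.congr (Eventually.of_forall fun x' => mul_comm _ _)
  have hAint : ∀ u : Rd d → ℝ, Integrable u → Integrable (convK K u) := by
    intro u hu
    have h1 : Integrable (fun p : Rd d × Rd d => u p.2 * K (p.1 - p.2))
        (volume.prod volume) := hu.convolution_integrand (ContinuousLinearMap.mul ℝ ℝ) hKint
    have h2 := h1.integral_prod_left
    refine h2.congr (Eventually.of_forall fun x => ?_)
    simp only [convK]
    exact integral_congr_ae (Eventually.of_forall fun x' => mul_comm _ _)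
  -- symmetry of the convolution pairing
  have hsymm : ∀ u w : Rd d → ℝ, Integrable u → Measurable w → (∃ C, ∀ y, |w y| ≤ C) →
      (∫ x, convK K u x * w x) = ∫ x, u x * convK K w x := by
    intro u w hu hwm hwb
    obtain ⟨C, hC⟩ := hwb
    have hprod : Integrable (Function.uncurry fun x x' : Rd d =>
        K (x - x') * u x' * w x) (volume.prod volume) := by
      have h1 : Integrable (fun p : Rd d × Rd d => u p.2 * K (p.1 - p.2))
          (volume.prod volume) := hu.convolution_integrand (ContinuousLinearMap.mul ℝ ℝ) hKint
      have h2 := h1.bdd_mul ((hwm.comp measurable_fst).aestronglyMeasurable)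
        (c := C) (Eventually.of_forall fun p => by simpa [Real.norm_eq_abs] using hC p.1)
      refine h2.congr (Eventually.of_forall fun p => ?_)
      simp only [Function.uncurry, Function.comp]
      ring
    calc (∫ x, convK K u x * w x) = ∫ x, ∫ x', K (x - x') * u x' * w x := by
          refine integral_congr_ae (Eventually.of_forall fun x => ?_)
          simp only [convK]
          exact (integral_mul_const (w x) _).symm
    _ = ∫ x', ∫ x, K (x - x') * u x' * w x := integral_integral_swap hprod
    _ = ∫ x', u x' * convK K w x' := by
          refine integral_congr_ae (Eventually.of_forall fun x' => ?_)
          simp only [convK]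
          rw [show (fun x => K (x - x') * u x' * w x)
              = fun x => u x' * (K (x' - x) * w x) from
            funext fun x => by rw [hKsub x x']; ring]
          rw [integral_const_mul]
  -- pointwise collapse of the left-hand side
  have hL4 : ∀ (x : Rd d) (v w : ℝ) (x' : Rd d),
      (∫ v', ∫ w', psiEps d Ψ ε ‖x - x'‖ * (v - v') ^ 2 * f x v w * f x' v' w')
        = psiEps d Ψ ε ‖x - x'‖ *
            (f x v w * (v ^ 2 * rhoOf d f x' - 2 * v * mOf d f x' + qOf d f x')) := by
    intro x v w x'
    have h1 : ∀ v' : ℝ,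
        (∫ w', psiEps d Ψ ε ‖x - x'‖ * (v - v') ^ 2 * f x v w * f x' v' w')
          = psiEps d Ψ ε ‖x - x'‖ * (v - v') ^ 2 * f x v w * ∫ w', f x' v' w' :=
      fun v' => integral_const_mul _ _
    simp only [h1]
    rw [show (fun v' => psiEps d Ψ ε ‖x - x'‖ * (v - v') ^ 2 * f x v w * ∫ w', f x' v' w')
        = fun v' => (psiEps d Ψ ε ‖x - x'‖ * f x v w) *
            (v ^ 2 * (∫ w', f x' v' w') - 2 * v * (v' * ∫ w', f x' v' w')
              + v' ^ 2 * ∫ w', f x' v' w') from funext fun v' => by ring]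
    rw [integral_const_mul]
    have hIa : Integrable (fun v' : ℝ => v ^ 2 * ∫ w', f x' v' w') :=
      (hgint x').const_mul _
    have hIb : Integrable (fun v' : ℝ => 2 * v * (v' * ∫ w', f x' v' w')) :=
      (hg1int x').const_mul _
    have hIc : Integrable (fun v' : ℝ => v' ^ 2 * ∫ w', f x' v' w') := hg2int x'
    have hIab : Integrable (fun v' : ℝ =>
        v ^ 2 * (∫ w', f x' v' w') - 2 * v * (v' * ∫ w', f x' v' w')) := hIa.sub hIb
    rw [integral_add hIab hIc, integral_sub hIa hIb, integral_const_mul, integral_const_mul]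
    rw [show (∫ v', ∫ w', f x' v' w') = rhoOf d f x' from rfl,
      show (∫ v', v' * ∫ w', f x' v' w') = mOf d f x' from rfl,
      show (∫ v', v' ^ 2 * ∫ w', f x' v' w') = qOf d f x' from rfl]
    ring
  have hL3 : ∀ (x : Rd d) (v w : ℝ),
      (∫ x', ∫ v', ∫ w', psiEps d Ψ ε ‖x - x'‖ * (v - v') ^ 2 * f x v w * f x' v' w')
        = f x v w * (v ^ 2 * convK K (rhoOf d f) x - 2 * v * convK K (mOf d f) x
            + convK K (qOf d f) x) := by
    intro x v w
    simp only [hL4]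
    rw [integral_congr_ae (show (fun x' => psiEps d Ψ ε ‖x - x'‖ *
          (f x v w * (v ^ 2 * rhoOf d f x' - 2 * v * mOf d f x' + qOf d f x'))) =ᵐ[volume]
        fun x' => K (x - x') *
          (f x v w * (v ^ 2 * rhoOf d f x' - 2 * v * mOf d f x' + qOf d f x')) by
      filter_upwards [hKshift x] with x' hx'
      rw [hx'])]
    rw [show (fun x' => K (x - x') *
          (f x v w * (v ^ 2 * rhoOf d f x' - 2 * v * mOf d f x' + qOf d f x')))
        = fun x' => f x v w * (v ^ 2 * (K (x - x') * rhoOf d f x')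
            - 2 * v * (K (x - x') * mOf d f x') + K (x - x') * qOf d f x') from
      funext fun x' => by ring]
    rw [integral_const_mul]
    have hKρ := hKmul (rhoOf d f) hρm ⟨_, hρbd⟩ x
    have hKm' := hKmul (mOf d f) hmm ⟨_, hmbd⟩ x
    have hKQ : Integrable (fun x' => K (x - x') * qOf d f x') :=
      hKmul (qOf d f) hQm ⟨_, hQbd⟩ x
    have hIa : Integrable (fun x' : Rd d => v ^ 2 * (K (x - x') * rhoOf d f x')) :=
      hKρ.const_mul _
    have hIb : Integrable (fun x' : Rd d => 2 * v * (K (x - x') * mOf d f x')) :=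
      hKm'.const_mul _
    have hIab : Integrable (fun x' : Rd d =>
        v ^ 2 * (K (x - x') * rhoOf d f x') - 2 * v * (K (x - x') * mOf d f x')) :=
      hIa.sub hIb
    rw [integral_add hIab hKQ, integral_sub hIa hIb, integral_const_mul, integral_const_mul]
    rfl
  have hL1 : ∀ x : Rd d,
      (∫ v, ∫ w, ∫ x', ∫ v', ∫ w',
          psiEps d Ψ ε ‖x - x'‖ * (v - v') ^ 2 * f x v w * f x' v' w')
        = qOf d f x * convK K (rhoOf d f) x - 2 * mOf d f x * convK K (mOf d f) x
            + rhoOf d f x * convK K (qOf d f) x := by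
    intro x
    have h2 : ∀ v : ℝ,
        (∫ w, ∫ x', ∫ v', ∫ w',
            psiEps d Ψ ε ‖x - x'‖ * (v - v') ^ 2 * f x v w * f x' v' w')
          = (∫ w, f x v w) * (v ^ 2 * convK K (rhoOf d f) x - 2 * v * convK K (mOf d f) x
              + convK K (qOf d f) x) := by
      intro v
      simp only [hL3]
      exact integral_mul_const _ _
    simp only [h2]
    rw [show (fun v => (∫ w, f x v w) *
          (v ^ 2 * convK K (rhoOf d f) x - 2 * v * convK K (mOf d f) x
            + convK K (qOf d f) x))
        = fun v => convK K (rhoOf d f) x * (v ^ 2 * ∫ w, f x v w)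
            - (2 * convK K (mOf d f) x) * (v * ∫ w, f x v w)
            + convK K (qOf d f) x * ∫ w, f x v w from funext fun v => by ring]
    have hIa : Integrable (fun v : ℝ =>
        convK K (rhoOf d f) x * (v ^ 2 * ∫ w, f x v w)) :=
      (hg2int x).const_mul _
    have hIb : Integrable (fun v : ℝ =>
        2 * convK K (mOf d f) x * (v * ∫ w, f x v w)) :=
      (hg1int x).const_mul _
    have hIc : Integrable (fun v : ℝ => convK K (qOf d f) x * ∫ w, f x v w) :=
      (hgint x).const_mul _
    have hIab : Integrable (fun v : ℝ =>
        convK K (rhoOf d f) x * (v ^ 2 * ∫ w, f x v w)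
          - 2 * convK K (mOf d f) x * (v * ∫ w, f x v w)) := hIa.sub hIb
    rw [integral_add hIab hIc, integral_sub hIa hIb,
      integral_const_mul, integral_const_mul, integral_const_mul]
    rw [show (∫ v, ∫ w, f x v w) = rhoOf d f x from rfl,
      show (∫ v, v * ∫ w, f x v w) = mOf d f x from rfl,
      show (∫ v, v ^ 2 * ∫ w, f x v w) = qOf d f x from rfl]
    ring
  -- pointwise collapse of the right-hand side, first term
  have hR1 : ∀ x : Rd d,
      (∫ x', psiEps d Ψ ε ‖x - x'‖ * rhoOf d f x') = convK K (rhoOf d f) x := by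
    intro x
    exact integral_congr_ae ((hKshift x).mul EventuallyEq.rfl)
  have hSx : ∀ x : Rd d,
      (∫ v, ∫ w, (v - VOf d f x) ^ 2 * f x v w) = qOf d f x - tOf d f x := by
    intro x
    have h1 : ∀ v : ℝ, (∫ w, (v - VOf d f x) ^ 2 * f x v w)
        = (v - VOf d f x) ^ 2 * ∫ w, f x v w := fun v => integral_const_mul _ _
    simp only [h1]
    rw [show (fun v => (v - VOf d f x) ^ 2 * ∫ w, f x v w)
        = fun v => (v ^ 2 * ∫ w, f x v w) - (2 * VOf d f x) * (v * ∫ w, f x v w)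
            + (VOf d f x ^ 2) * ∫ w, f x v w from funext fun v => by ring]
    have hIa : Integrable (fun v : ℝ => v ^ 2 * ∫ w, f x v w) := hg2int x
    have hIb : Integrable (fun v : ℝ => 2 * VOf d f x * (v * ∫ w, f x v w)) :=
      (hg1int x).const_mul _
    have hIc : Integrable (fun v : ℝ => VOf d f x ^ 2 * ∫ w, f x v w) :=
      (hgint x).const_mul _
    have hIab : Integrable (fun v : ℝ =>
        v ^ 2 * (∫ w, f x v w) - 2 * VOf d f x * (v * ∫ w, f x v w)) := hIa.sub hIb
    rw [integral_add hIab hIc, integral_sub hIa hIb, integral_const_mul, integral_const_mul]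
    rw [show (∫ v, ∫ w, f x v w) = rhoOf d f x from rfl,
      show (∫ v, v * ∫ w, f x v w) = mOf d f x from rfl,
      show (∫ v, v ^ 2 * ∫ w, f x v w) = qOf d f x from rfl]
    rw [show tOf d f x = VOf d f x * mOf d f x from rfl, ← hVρ x]
    ring
  -- pointwise collapse of the right-hand side, second term
  have hR2 : ∀ x : Rd d,
      (∫ x', psiEps d Ψ ε ‖x - x'‖ * (VOf d f x - VOf d f x') ^ 2
          * rhoOf d f x * rhoOf d f x')
        = tOf d f x * convK K (rhoOf d f) x - 2 * mOf d f x * convK K (mOf d f) x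
            + rhoOf d f x * convK K (tOf d f) x := by
    intro x
    rw [integral_congr_ae (show (fun x' => psiEps d Ψ ε ‖x - x'‖ * (VOf d f x - VOf d f x') ^ 2
          * rhoOf d f x * rhoOf d f x') =ᵐ[volume]
        fun x' => K (x - x') * (VOf d f x - VOf d f x') ^ 2
          * rhoOf d f x * rhoOf d f x' by
      filter_upwards [hKshift x] with x' hx'
      rw [hx'])]
    rw [show (fun x' => K (x - x') * (VOf d f x - VOf d f x') ^ 2
          * rhoOf d f x * rhoOf d f x')
        = fun x' => (VOf d f x ^ 2 * rhoOf d f x) * (K (x - x') * rhoOf d f x')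
            - (2 * VOf d f x * rhoOf d f x) * (K (x - x') * mOf d f x')
            + rhoOf d f x * (K (x - x') * tOf d f x') from funext fun x' => by
      rw [show tOf d f x' = VOf d f x' * mOf d f x' from rfl, ← hVρ x']
      ring]
    have hKρ := hKmul (rhoOf d f) hρm ⟨_, hρbd⟩ x
    have hKm' := hKmul (mOf d f) hmm ⟨_, hmbd⟩ x
    have hKT := hKmul (tOf d f) hTm ⟨_, hTbd⟩ x
    have hIa : Integrable (fun x' : Rd d =>
        VOf d f x ^ 2 * rhoOf d f x * (K (x - x') * rhoOf d f x')) := hKρ.const_mul _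
    have hIb : Integrable (fun x' : Rd d =>
        2 * VOf d f x * rhoOf d f x * (K (x - x') * mOf d f x')) := hKm'.const_mul _
    have hIc : Integrable (fun x' : Rd d =>
        rhoOf d f x * (K (x - x') * tOf d f x')) := hKT.const_mul _
    have hIab : Integrable (fun x' : Rd d =>
        VOf d f x ^ 2 * rhoOf d f x * (K (x - x') * rhoOf d f x')
          - 2 * VOf d f x * rhoOf d f x * (K (x - x') * mOf d f x')) := hIa.sub hIb
    rw [integral_add hIab hIc, integral_sub hIa hIb,
      integral_const_mul, integral_const_mul, integral_const_mul]
    rw [show tOf d f x = VOf d f x * mOf d f x from rfl, ← hVρ x]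
    rw [show (∫ x', K (x - x') * rhoOf d f x') = convK K (rhoOf d f) x from rfl,
      show (∫ x', K (x - x') * mOf d f x') = convK K (mOf d f) x from rfl,
      show (∫ x', K (x - x') * tOf d f x') = convK K (tOf d f) x from rfl]
    ring
  -- integrability of the outer integrands
  have hAρ := hAint (rhoOf d f) hρint
  have hAm := hAint (mOf d f) hmint
  have hAQ := hAint (qOf d f) hQint
  have hAT := hAint (tOf d f) hTint
  have hQAρ : Integrable fun x => qOf d f x * convK K (rhoOf d f) x :=
    hAρ.bdd_mul hQm.aestronglyMeasurable
      (c := R ^ 2 * (B * lenR) * lenR) (Eventually.of_forall fun x => by simpa [Real.norm_eq_abs] using hQbd x)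
  have hTAρ : Integrable fun x => tOf d f x * convK K (rhoOf d f) x :=
    hAρ.bdd_mul hTm.aestronglyMeasurable
      (c := R * (R * (B * lenR) * lenR)) (Eventually.of_forall fun x => by simpa [Real.norm_eq_abs] using hTbd x)
  have hmAm : Integrable fun x => mOf d f x * convK K (mOf d f) x :=
    hAm.bdd_mul hmm.aestronglyMeasurable
      (c := R * (B * lenR) * lenR) (Eventually.of_forall fun x => by simpa [Real.norm_eq_abs] using hmbd x)
  have hρAQ : Integrable fun x => rhoOf d f x * convK K (qOf d f) x :=
    hAQ.bdd_mul hρm.aestronglyMeasurable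
      (c := B * lenR * lenR) (Eventually.of_forall fun x => by simpa [Real.norm_eq_abs] using hρbd x)
  have hρAT : Integrable fun x => rhoOf d f x * convK K (tOf d f) x :=
    hAT.bdd_mul hρm.aestronglyMeasurable
      (c := B * lenR * lenR) (Eventually.of_forall fun x => by simpa [Real.norm_eq_abs] using hρbd x)
  have hmAm2 : Integrable fun x => 2 * mOf d f x * convK K (mOf d f) x := by
    refine (hmAm.const_mul 2).congr (Eventually.of_forall fun x => ?_)
    ring
  -- symmetry identities
  have hsymQ : (∫ x, qOf d f x * convK K (rhoOf d f) x)
      = ∫ x, rhoOf d f x * convK K (qOf d f) x := by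
    have h1 : (∫ x, qOf d f x * convK K (rhoOf d f) x)
        = ∫ x, convK K (rhoOf d f) x * qOf d f x :=
      integral_congr_ae (Eventually.of_forall fun x => mul_comm _ _)
    rw [h1, hsymm (rhoOf d f) (qOf d f) hρint hQm ⟨_, hQbd⟩]
  have hsymT : (∫ x, tOf d f x * convK K (rhoOf d f) x)
      = ∫ x, rhoOf d f x * convK K (tOf d f) x := by
    have h1 : (∫ x, tOf d f x * convK K (rhoOf d f) x)
        = ∫ x, convK K (rhoOf d f) x * tOf d f x :=
      integral_congr_ae (Eventually.of_forall fun x => mul_comm _ _)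
    rw [h1, hsymm (rhoOf d f) (tOf d f) hρint hTm ⟨_, hTbd⟩]
  -- assemble
  have hLHS : (∫ x : Rd d, ∫ v : ℝ, ∫ w : ℝ, ∫ x' : Rd d, ∫ v' : ℝ, ∫ w' : ℝ,
        psiEps d Ψ ε ‖x - x'‖ * (v - v') ^ 2 * f x v w * f x' v' w')
      = (∫ x, qOf d f x * convK K (rhoOf d f) x)
        - (∫ x, 2 * mOf d f x * convK K (mOf d f) x)
        + ∫ x, rhoOf d f x * convK K (qOf d f) x := by
    simp only [hL1]
    have hIab : Integrable (fun x => qOf d f x * convK K (rhoOf d f) x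
        - 2 * mOf d f x * convK K (mOf d f) x) := hQAρ.sub hmAm2
    rw [integral_add hIab hρAQ, integral_sub hQAρ hmAm2]
  have hRHS1 : (∫ x : Rd d, (∫ x' : Rd d, psiEps d Ψ ε ‖x - x'‖ * rhoOf d f x')
        * ∫ v : ℝ, ∫ w : ℝ, (v - VOf d f x) ^ 2 * f x v w)
      = (∫ x, qOf d f x * convK K (rhoOf d f) x)
        - ∫ x, tOf d f x * convK K (rhoOf d f) x := by
    have h1 : ∀ x : Rd d, (∫ x' : Rd d, psiEps d Ψ ε ‖x - x'‖ * rhoOf d f x')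
        * (∫ v : ℝ, ∫ w : ℝ, (v - VOf d f x) ^ 2 * f x v w)
        = qOf d f x * convK K (rhoOf d f) x - tOf d f x * convK K (rhoOf d f) x := by
      intro x
      rw [hR1 x, hSx x]
      ring
    simp only [h1]
    rw [integral_sub hQAρ hTAρ]
  have hRHS2 : (∫ x : Rd d, ∫ x' : Rd d,
        psiEps d Ψ ε ‖x - x'‖ * (VOf d f x - VOf d f x') ^ 2
          * rhoOf d f x * rhoOf d f x')
      = (∫ x, tOf d f x * convK K (rhoOf d f) x)
        - (∫ x, 2 * mOf d f x * convK K (mOf d f) x)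
        + ∫ x, rhoOf d f x * convK K (tOf d f) x := by
    simp only [hR2]
    have hIab : Integrable (fun x => tOf d f x * convK K (rhoOf d f) x
        - 2 * mOf d f x * convK K (mOf d f) x) := hTAρ.sub hmAm2
    rw [integral_add hIab hρAT, integral_sub hTAρ hmAm2]
  rw [hLHS, hRHS1, hRHS2]
  rw [hsymQ, hsymT]
  ring
end
end

section
/- Let d ≥ 1, a ∈ (0,1), and θ > 0 with (1+a)θ + 3θ ≤ 3. Let V : ℝ^d → ℝ be of class C² with compact support. Then ∫ ΔV(x) · Δ(N∘V)(x) dx ≤ (1 + 1/θ)(1+a) ∫ |ΔV(x)|² dx + (1 + a + 3/θ) ∫ |∇V(x)|⁴ dx. -/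
open MeasureTheory Real Filter Topology
open scoped RealInnerProductSpace

noncomputable section

namespace Stmt17Aux

variable {d : ℕ}

lemma pdAt_contDiff_one {V : Rd d → ℝ} (h : ContDiff ℝ 2 V) (i : Fin d) :
    ContDiff ℝ 1 (pdAt V i) := by
  have h1 : ContDiff ℝ 1 (fderiv ℝ V) := h.fderiv_right (by norm_num)
  exact (ContinuousLinearMap.apply ℝ ℝ (EuclideanSpace.single i (1:ℝ))).contDiff.comp h1

lemma pdAt_continuous {V : Rd d → ℝ} (h : ContDiff ℝ 1 V) (i : Fin d) :
    Continuous (pdAt V i) := by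
  have h1 : Continuous (fderiv ℝ V) := (h.fderiv_right (m := 0) (by norm_num)).continuous
  exact (ContinuousLinearMap.apply ℝ ℝ (EuclideanSpace.single i (1:ℝ))).continuous.comp h1

lemma hasDerivAt_Ncube (a u : ℝ) :
    HasDerivAt (Ncube a) (-3*u^2 + 2*(1+a)*u - a) u := by
  have h := (((hasDerivAt_id u).mul ((hasDerivAt_const u (1:ℝ)).sub (hasDerivAt_id u))).mul
    ((hasDerivAt_id u).sub (hasDerivAt_const u a)))
  have h2 : HasDerivAt (fun v : ℝ => v * (1 - v) * (v - a)) (-3*u^2 + 2*(1+a)*u - a) u := by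
    exact (h.congr_deriv (by simp only [Pi.sub_apply, Pi.mul_apply, id]; ring : _ = -3*u^2 + 2*(1+a)*u - a) :)
  exact h2

lemma key_fderiv (a : ℝ) {V : Rd d → ℝ} (hV : ContDiff ℝ 2 V) (i : Fin d) (x : Rd d) :
    pdAt (fun y => Ncube a (V y)) i x
      = (-3*(V x)^2 + 2*(1+a)*(V x) - a) * pdAt V i x := by
  have hVd : HasFDerivAt V (fderiv ℝ V x) x :=
    ((hV.differentiable (by norm_num)) x).hasFDerivAt
  have h : HasFDerivAt (fun y => Ncube a (V y))
      ((-3*(V x)^2 + 2*(1+a)*(V x) - a) • fderiv ℝ V x) x :=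
    (hasDerivAt_Ncube a (V x)).comp_hasFDerivAt x hVd
  rw [pdAt, h.fderiv]
  simp [pdAt]

lemma key2 (a : ℝ) {V : Rd d → ℝ} (hV : ContDiff ℝ 2 V) (i : Fin d) (x : Rd d) :
    pdAt (pdAt (fun y => Ncube a (V y)) i) i x
      = (-3*(V x)^2 + 2*(1+a)*(V x) - a) * pdAt (pdAt V i) i x
        + (2*(1+a) - 6*(V x)) * (pdAt V i x)^2 := by
  have hfun : pdAt (fun y => Ncube a (V y)) i
      = fun y => (-3*(V y)^2 + 2*(1+a)*(V y) - a) * pdAt V i y :=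
    funext (key_fderiv a hV i)
  rw [hfun]
  have hVd : HasFDerivAt V (fderiv ℝ V x) x :=
    ((hV.differentiable (by norm_num)) x).hasFDerivAt
  have hN' : HasDerivAt (fun v : ℝ => -3*v^2 + 2*(1+a)*v - a) (-6*(V x) + 2*(1+a)) (V x) := by
    have h2 : HasDerivAt (fun v : ℝ => v^2) (2*(V x)) (V x) := by
      simpa using hasDerivAt_pow 2 (V x)
    have := ((h2.const_mul (-3:ℝ)).add ((hasDerivAt_id (V x)).const_mul (2*(1+a)))).sub
      (hasDerivAt_const (V x) a)
    exact (this.congr_deriv (by ring : _ = -6*(V x) + 2*(1+a)) :)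
  have hf : HasFDerivAt (fun y => -3*(V y)^2 + 2*(1+a)*(V y) - a)
      ((-6*(V x) + 2*(1+a)) • fderiv ℝ V x) x := hN'.comp_hasFDerivAt x hVd
  have hg : HasFDerivAt (pdAt V i) (fderiv ℝ (pdAt V i) x) x :=
    (((pdAt_contDiff_one hV i).differentiable one_ne_zero) x).hasFDerivAt
  have hmul : HasFDerivAt (fun y => (-3*(V y)^2 + 2*(1+a)*(V y) - a) * pdAt V i y) _ x := hf.mul hg
  rw [pdAt, hmul.fderiv]
  simp only [ContinuousLinearMap.add_apply, ContinuousLinearMap.coe_smul',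
    Pi.smul_apply, smul_eq_mul]
  rw [pdAt, pdAt]
  ring

lemma lapl_comp (a : ℝ) {V : Rd d → ℝ} (hV : ContDiff ℝ 2 V) (x : Rd d) :
    lapl (fun y => Ncube a (V y)) x
      = (-3*(V x)^2 + 2*(1+a)*(V x) - a) * lapl V x
        + (2*(1+a) - 6*(V x)) * ∑ i, (pdAt V i x)^2 := by
  unfold lapl
  rw [Finset.mul_sum, Finset.mul_sum, ← Finset.sum_add_distrib]
  exact Finset.sum_congr rfl fun i _ => key2 a hV i x

lemma grad_comp {V : Rd d → ℝ} (x : Rd d) (i : Fin d) :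
    gradient V x i = pdAt V i x := by
  have h1 : ⟪gradient V x, EuclideanSpace.single i (1:ℝ)⟫
      = fderiv ℝ V x (EuclideanSpace.single i (1:ℝ)) :=
    InnerProductSpace.toDual_symm_apply
  rw [EuclideanSpace.inner_single_right] at h1
  simpa [pdAt] using h1

lemma grad_norm_sq {V : Rd d → ℝ} (x : Rd d) :
    ‖gradient V x‖^2 = ∑ i, (pdAt V i x)^2 := by
  rw [EuclideanSpace.norm_eq, Real.sq_sqrt (by positivity)]
  exact Finset.sum_congr rfl fun i _ => by
    rw [Real.norm_eq_abs, sq_abs, grad_comp]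

lemma alg (a θ L G2 v : ℝ) (ha0 : 0 < a) (hθ : 0 < θ)
    (hθ3 : (1+a)*θ + 3*θ ≤ 3) (hG2 : 0 ≤ G2) :
    L * ((-3*v^2 + 2*(1+a)*v - a) * L + (2*(1+a) - 6*v) * G2)
      ≤ (1 + 1/θ) * (1+a) * L^2 + (1 + a + 3/θ) * G2^2 := by
  have h1 : 2*v*L^2 ≤ θ*v^2*L^2 + (1/θ)*L^2 := by
    have h := div_nonneg (sq_nonneg (θ*v*L - L)) hθ.le
    have he : (θ*v*L - L)^2/θ = θ*v^2*L^2 - 2*v*L^2 + (1/θ)*L^2 := by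
      field_simp; ring
    rw [he] at h; linarith
  have h3 : -(6*v*L*G2) ≤ 3*θ*v^2*L^2 + (3/θ)*G2^2 := by
    have h := div_nonneg (sq_nonneg (θ*v*L + G2)) hθ.le
    have he : (θ*v*L + G2)^2/θ = θ*v^2*L^2 + 2*v*L*G2 + (1/θ)*G2^2 := by
      field_simp; ring
    rw [he] at h
    have h3θ : (3/θ) = 3 * (1/θ) := by ring
    rw [h3θ]; linarith
  have h2 : 2*L*G2 ≤ L^2 + G2^2 := by nlinarith [sq_nonneg (L - G2)]
  have h1' := mul_le_mul_of_nonneg_left h1 (by linarith : (0:ℝ) ≤ 1+a)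
  have h2' := mul_le_mul_of_nonneg_left h2 (by linarith : (0:ℝ) ≤ 1+a)
  have habs : 0 ≤ (3 - (1+a)*θ - 3*θ) * (v^2*L^2) :=
    mul_nonneg (by linarith) (by positivity)
  have haL : 0 ≤ a * L^2 := mul_nonneg ha0.le (sq_nonneg L)
  nlinarith [h1', h2', h3, habs, haL]

lemma hcs_sum {X E ι : Type*} [TopologicalSpace X] [AddCommMonoid E]
    (s : Finset ι) (f : ι → X → E) (h : ∀ i ∈ s, HasCompactSupport (f i)) :
    HasCompactSupport fun x => ∑ i ∈ s, f i x := by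
  classical
  induction s using Finset.induction_on with
  | empty => simp only [Finset.sum_empty]; exact HasCompactSupport.zero
  | @insert j t hx ih =>
    simp only [Finset.sum_insert hx]
    exact HasCompactSupport.add (h j (Finset.mem_insert_self j t))
      (ih fun i hi => h i (Finset.mem_insert_of_mem hi))

end Stmt17Aux

/-- the key nonlinear estimate
`∫ ΔV Δ(N∘V) ≤ (1+1/θ)(1+a) ∫ |ΔV|² + (1+a+3/θ) ∫ |∇V|⁴`. -/
theorem stmt17 (d : ℕ) (hd : 1 ≤ d) (a θ : ℝ) (ha : a ∈ Set.Ioo (0 : ℝ) 1)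
    (hθ : 0 < θ) (hθ3 : (1 + a) * θ + 3 * θ ≤ 3)
    (V : Rd d → ℝ) (hVC2 : ContDiff ℝ 2 V) (hVsupp : HasCompactSupport V) :
    (∫ x : Rd d, lapl V x * lapl (fun y => Ncube a (V y)) x)
      ≤ (1 + 1 / θ) * (1 + a) * (∫ x : Rd d, (lapl V x) ^ 2)
        + (1 + a + 3 / θ) * ∫ x : Rd d, ‖gradient V x‖ ^ 4 := by
  obtain ⟨ha0, ha1⟩ := ha
  have hpd1 : ∀ i, ContDiff ℝ 1 (pdAt V i) := Stmt17Aux.pdAt_contDiff_one hVC2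
  have hC_L : Continuous (lapl V) := by
    unfold lapl
    exact continuous_finset_sum _ fun i _ => Stmt17Aux.pdAt_continuous (hpd1 i) i
  have hC_S : Continuous (fun x : Rd d => ∑ i, (pdAt V i x)^2) :=
    continuous_finset_sum _ fun i _ => ((hpd1 i).continuous.pow 2)
  have hsupp_pd : ∀ i, HasCompactSupport (pdAt V i) := fun i => hVsupp.fderiv_apply ℝ (EuclideanSpace.single i (1:ℝ))
  have hsupp_L : HasCompactSupport (lapl V) := by
    unfold lapl
    exact Stmt17Aux.hcs_sum _ _ fun i _ => (hsupp_pd i).fderiv_apply ℝ (EuclideanSpace.single i (1:ℝ))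
  have hC_grad : Continuous (fun x : Rd d => gradient V x) := by
    have h1 : Continuous (fderiv ℝ V) := (hVC2.fderiv_right (m := 0) (by norm_num)).continuous
    exact (InnerProductSpace.toDual ℝ (Rd d)).symm.continuous.comp h1
  have hsupp_grad : HasCompactSupport (fun x : Rd d => gradient V x) :=
    (hVsupp.fderiv ℝ).comp_left (by simp)
  have int1 : Integrable (fun x : Rd d => (lapl V x)^2) :=
    ((continuous_pow 2).comp hC_L : Continuous (fun x : Rd d => (lapl V x)^2)).integrable_of_hasCompactSupport
      (hsupp_L.comp_left (g := fun t : ℝ => t^2) (by simp))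
  have int2 : Integrable (fun x : Rd d => ‖gradient V x‖^4) :=
    ((continuous_pow 4).comp hC_grad.norm : Continuous (fun x : Rd d => ‖gradient V x‖^4)).integrable_of_hasCompactSupport
      (hsupp_grad.comp_left (g := fun y : Rd d => ‖y‖^4) (by simp))
  have heq : (fun x : Rd d => lapl V x * lapl (fun y => Ncube a (V y)) x)
      = fun x : Rd d => lapl V x * ((-3*(V x)^2 + 2*(1+a)*(V x) - a) * lapl V x
          + (2*(1+a) - 6*(V x)) * ∑ i, (pdAt V i x)^2) :=
    funext fun x => by rw [Stmt17Aux.lapl_comp a hVC2 x]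
  have intf : Integrable (fun x : Rd d => lapl V x * lapl (fun y => Ncube a (V y)) x) := by
    rw [heq]
    have hCrest : Continuous (fun x : Rd d => (-3*(V x)^2 + 2*(1+a)*(V x) - a) * lapl V x
        + (2*(1+a) - 6*(V x)) * ∑ i, (pdAt V i x)^2) := by
      have hCV := hVC2.continuous
      fun_prop
    exact (hC_L.mul hCrest).integrable_of_hasCompactSupport hsupp_L.mul_right
  have hpt : ∀ x : Rd d, lapl V x * lapl (fun y => Ncube a (V y)) x
      ≤ (1 + 1/θ) * (1+a) * (lapl V x)^2 + (1 + a + 3/θ) * ‖gradient V x‖^4 := by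
    intro x
    rw [Stmt17Aux.lapl_comp a hVC2 x]
    have h4 : ‖gradient V x‖^4 = (∑ i, (pdAt V i x)^2)^2 := by
      rw [show (4:ℕ) = 2*2 from rfl, pow_mul, Stmt17Aux.grad_norm_sq (V := V) x]
    rw [h4]
    exact Stmt17Aux.alg a θ (lapl V x) _ (V x) ha0 hθ hθ3 (by positivity)
  calc (∫ x : Rd d, lapl V x * lapl (fun y => Ncube a (V y)) x)
      ≤ ∫ x : Rd d, ((1 + 1/θ) * (1+a) * (lapl V x)^2 + (1 + a + 3/θ) * ‖gradient V x‖^4) :=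
        integral_mono intf ((int1.const_mul _).add (int2.const_mul _)) hpt
    _ = (1 + 1 / θ) * (1 + a) * (∫ x : Rd d, (lapl V x) ^ 2)
        + (1 + a + 3 / θ) * ∫ x : Rd d, ‖gradient V x‖ ^ 4 := by
        rw [integral_add (int1.const_mul _) (int2.const_mul _),
          integral_const_mul, integral_const_mul]
end
end

section
/- Let d ≥ 1, ε > 0, and let Ψ satisfy the kernel assumptions. Let ρ0^ε ∈ L¹(ℝ^d)∩L^∞(ℝ^d) be nonnegative, let ρ0 ∈ L²(ℝ^d), let V : ℝ^d → ℝ be bounded measurable, and let V^ε : ℝ^d → ℝ be measurable with ρ0^ε |V^ε|² integrable. Then ε^{-2} ∬ Ψ_ε(‖x−x'‖) ρ0^ε(x)(V^ε(x)−V(x)) [ ρ0^ε(x')(V^ε(x')−V^ε(x)) − ρ0(x')(V(x')−V(x)) ] dx' dx ≤ 2‖V‖_{L^∞} · 𝓗 + ε^{-4} ‖V‖_{L^∞} ‖ρ0^ε‖_{L^∞} ‖ρ0 − ρ0^ε‖²_{L²}, where 𝓗 := (1/2)∫ ρ0^ε(x) |V^ε(x)−V(x)|² dx. -/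
open MeasureTheory Real Filter Topology
open scoped RealInnerProductSpace

noncomputable section

/-! ### Auxiliary lemmas -/

lemma norm_mem_null {d : ℕ} (hd : 1 ≤ d) {A : Set ℝ} (hA : volume A = 0) :
    volume {y : Rd d | ‖y‖ ∈ A} = 0 := by
  obtain ⟨B, hAB, hBm, hB0⟩ := exists_measurable_superset_of_null hA
  have hnt : Nontrivial (Rd d) := Module.nontrivial_of_finrank_pos (R := ℝ)
    (by rw [finrank_euclideanSpace_fin]; omega)
  set μ : Measure (Rd d) := volume with hμ
  have mp := Measure.measurePreserving_homeomorphUnitSphereProd μ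
  set T : Set (Set.Ioi (0:ℝ)) := Subtype.val ⁻¹' B with hT
  have hTm : MeasurableSet T := measurable_subtype_coe hBm
  have hTnull : Measure.comap Subtype.val (volume : Measure ℝ) T = 0 := by
    rw [comap_subtype_coe_apply measurableSet_Ioi]
    refine measure_mono_null ?_ hB0
    rintro r ⟨t, ht, rfl⟩; exact ht
  have hvol : Measure.volumeIoiPow (Module.finrank ℝ (Rd d) - 1) T = 0 := by
    rw [Measure.volumeIoiPow, withDensity_apply _ hTm, setLIntegral_measure_zero _ _ hTnull]
  have hpre : (homeomorphUnitSphereProd (Rd d)) ⁻¹' (Set.univ ×ˢ T)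
      = Subtype.val ⁻¹' {y : Rd d | ‖y‖ ∈ B} := by
    ext x
    simp [T, Set.mem_prod]
  have key : μ ({y : Rd d | ‖y‖ ∈ B} ∩ {0}ᶜ) = 0 := by
    have h1 : (μ.comap Subtype.val)
        ((Subtype.val : ({0}ᶜ : Set (Rd d)) → Rd d) ⁻¹' {y : Rd d | ‖y‖ ∈ B}) =
        μ.toSphere.prod (Measure.volumeIoiPow (Module.finrank ℝ (Rd d) - 1))
          (Set.univ ×ˢ T) := by
      rw [← hpre]
      exact mp.measure_preimage (MeasurableSet.univ.prod hTm).nullMeasurableSet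
    rw [comap_subtype_coe_apply (measurableSet_singleton (0 : Rd d)).compl,
      Subtype.image_preimage_coe] at h1
    rw [Set.inter_comm, h1, Measure.prod_prod, hvol, mul_zero]
  have h0 : μ {(0 : Rd d)} = 0 := measure_singleton 0
  refine measure_mono_null (fun y (hy : ‖y‖ ∈ A) => hAB hy) ?_
  have hsub : ({y : Rd d | ‖y‖ ∈ B}) ⊆ ({y : Rd d | ‖y‖ ∈ B} ∩ {0}ᶜ) ∪ {0} := by
    intro y hy
    by_cases h : y = 0
    · exact Or.inr h
    · exact Or.inl ⟨hy, h⟩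
  exact measure_mono_null hsub
    (le_antisymm ((measure_union_le _ _).trans (by rw [key, h0]; simp)) zero_le)

section kernelLemmas

variable {d : ℕ} {k m : Rd d → ℝ}

lemma kSub_aesm (hk : AEStronglyMeasurable k (volume : Measure (Rd d))) :
    AEStronglyMeasurable (fun p : Rd d × Rd d => k (p.1 - p.2))
      ((volume : Measure (Rd d)).prod volume) :=
  hk.comp_quasiMeasurePreserving
    (quasiMeasurePreserving_sub_of_right_invariant volume volume)

lemma kSub_nonneg (hk : ∀ᵐ y : Rd d ∂volume, 0 ≤ k y) :
    ∀ᵐ p : Rd d × Rd d ∂((volume : Measure (Rd d)).prod volume), 0 ≤ k (p.1 - p.2) :=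
  (quasiMeasurePreserving_sub_of_right_invariant volume volume).ae hk

lemma joint_snd (hk : Integrable k (volume : Measure (Rd d))) (hm : Integrable m volume) :
    Integrable (fun p : Rd d × Rd d => k (p.1 - p.2) * m p.2)
      ((volume : Measure (Rd d)).prod volume) := by
  have h2 : (fun p : Rd d × Rd d => k (p.1 - p.2) * m p.2)
      = fun p : Rd d × Rd d => (ContinuousLinearMap.mul ℝ ℝ) (m p.2) (k (p.1 - p.2)) := by
    funext p; simp [mul_comm]
  rw [h2]
  exact hm.convolution_integrand (ContinuousLinearMap.mul ℝ ℝ) hk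

lemma joint_fst (hk : Integrable k (volume : Measure (Rd d))) (hke : ∀ y, k (-y) = k y)
    (hm : Integrable m volume) :
    Integrable (fun p : Rd d × Rd d => k (p.1 - p.2) * m p.1)
      ((volume : Measure (Rd d)).prod volume) := by
  have h := (joint_snd hk hm).swap
  have h2 : ((fun p : Rd d × Rd d => k (p.1 - p.2) * m p.2) ∘ Prod.swap)
      = fun p : Rd d × Rd d => k (p.1 - p.2) * m p.1 := by
    funext p
    show k (p.2 - p.1) * m p.1 = _
    rw [← neg_sub p.1 p.2, hke]
  rwa [h2] at h

lemma eval_fst (hk : Integrable k (volume : Measure (Rd d))) (hk1 : (∫ y : Rd d, k y) = 1)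
    (hke : ∀ y, k (-y) = k y) (hm : Integrable m volume) :
    ∫ p : Rd d × Rd d, k (p.1 - p.2) * m p.1 ∂((volume : Measure (Rd d)).prod volume)
      = ∫ x : Rd d, m x := by
  rw [integral_prod _ (joint_fst hk hke hm)]
  refine integral_congr_ae (Eventually.of_forall fun x => ?_)
  simp only
  rw [integral_mul_const, integral_sub_left_eq_self k volume x, hk1, one_mul]

lemma eval_snd (hk : Integrable k (volume : Measure (Rd d))) (hk1 : (∫ y : Rd d, k y) = 1)
    (hm : Integrable m volume) :
    ∫ p : Rd d × Rd d, k (p.1 - p.2) * m p.2 ∂((volume : Measure (Rd d)).prod volume)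
      = ∫ x : Rd d, m x := by
  rw [← integral_prod_swap]
  have h := (joint_snd hk hm).swap
  have h2 : ((fun p : Rd d × Rd d => k (p.1 - p.2) * m p.2) ∘ Prod.swap)
      = fun z : Rd d × Rd d => k (z.2 - z.1) * m z.1 := rfl
  rw [h2] at h
  have h3 : (fun z : Rd d × Rd d => k ((Prod.swap z).1 - (Prod.swap z).2) * m (Prod.swap z).2)
      = fun z : Rd d × Rd d => k (z.2 - z.1) * m z.1 := rfl
  show ∫ z : Rd d × Rd d, k (z.swap.1 - z.swap.2) * m z.swap.2
      ∂((volume : Measure (Rd d)).prod volume) = _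
  rw [show (fun z : Rd d × Rd d => k (z.swap.1 - z.swap.2) * m z.swap.2)
      = fun z : Rd d × Rd d => k (z.2 - z.1) * m z.1 from rfl]
  rw [integral_prod _ h]
  refine integral_congr_ae (Eventually.of_forall fun x => ?_)
  simp only
  rw [integral_mul_const, integral_sub_right_eq_self k x, hk1, one_mul]

end kernelLemmas

set_option maxHeartbeats 2000000 in
theorem stmt18 (d : ℕ) (hd : 1 ≤ d) (ε : ℝ) (hε : 0 < ε) (Ψ : ℝ → ℝ) (σ : ℝ)
    (hΨpos : ∀ᵐ r ∂(volume.restrict (Set.Ici (0 : ℝ))), 0 < Ψ r)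
    (hΨint : Integrable fun y : Rd d => Ψ ‖y‖)
    (hΨ1 : (∫ y : Rd d, Ψ ‖y‖) = 1)
    (hσint : Integrable fun y : Rd d => Ψ ‖y‖ * ‖y‖ ^ 2)
    (hσdef : σ = (1 / 2) * ∫ y : Rd d, Ψ ‖y‖ * ‖y‖ ^ 2)
    (hσpos : 0 < σ)
    (ρ0ε ρ0 V Vε : Rd d → ℝ)
    (hρεmeas : Measurable ρ0ε) (hρεnn : ∀ x, 0 ≤ ρ0ε x)
    (hρεint : Integrable ρ0ε) (Bρ : ℝ) (hρεbdd : ∀ x, ρ0ε x ≤ Bρ)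
    (hρ0meas : Measurable ρ0) (hρ0L2 : Integrable fun x => (ρ0 x) ^ 2)
    (hVmeas : Measurable V) (BV : ℝ) (hVbdd : ∀ x, |V x| ≤ BV)
    (hVεmeas : Measurable Vε)
    (hVεint : Integrable fun x => ρ0ε x * (Vε x) ^ 2) :
    (ε ^ 2)⁻¹ * (∫ x : Rd d, ∫ x' : Rd d, psiEps d Ψ ε ‖x - x'‖ * ρ0ε x * (Vε x - V x)
        * (ρ0ε x' * (Vε x' - Vε x) - ρ0 x' * (V x' - V x)))
      ≤ 2 * BV * ((1 / 2) * ∫ x : Rd d, ρ0ε x * (Vε x - V x) ^ 2)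
        + (ε ^ 4)⁻¹ * BV * Bρ * ∫ x : Rd d, (ρ0 x - ρ0ε x) ^ 2 := by
  have hBρ : 0 ≤ Bρ := le_trans (hρεnn 0) (hρεbdd 0)
  have hBV : 0 ≤ BV := le_trans (abs_nonneg _) (hVbdd 0)
  -- the kernel
  set k : Rd d → ℝ := fun y => psiEps d Ψ ε ‖y‖ with hkdef
  have hke : ∀ y, k (-y) = k y := by intro y; simp [hkdef, psiEps]
  have hεd : (0:ℝ) < ε ^ d := pow_pos hε d
  have hsc : ∀ y : Rd d, k y = (ε ^ d)⁻¹ * (fun z : Rd d => Ψ ‖z‖) (ε⁻¹ • y) := by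
    intro y
    simp only [hkdef, psiEps, norm_smul, norm_inv, Real.norm_eq_abs, abs_of_pos hε,
      div_eq_inv_mul]
  -- integrability of k
  have hk_int : Integrable k (volume : Measure (Rd d)) := by
    have h1 : Integrable (fun y : Rd d => (fun z : Rd d => Ψ ‖z‖) (ε⁻¹ • y)) volume :=
      (integrable_comp_smul_iff volume (fun z : Rd d => Ψ ‖z‖) (inv_ne_zero hε.ne')).2 hΨint
    exact (h1.const_mul _).congr (Eventually.of_forall fun y => (hsc y).symm)
  -- total mass 1
  have hk_one : (∫ y : Rd d, k y) = 1 := by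
    have h1 : (∫ y : Rd d, (fun z : Rd d => Ψ ‖z‖) (ε⁻¹ • y))
        = (ε ^ d) • ∫ y : Rd d, Ψ ‖y‖ := by
      rw [MeasureTheory.Measure.integral_comp_inv_smul_of_nonneg volume
        (fun z : Rd d => Ψ ‖z‖) hε.le, finrank_euclideanSpace_fin]
    calc (∫ y : Rd d, k y) = ∫ y : Rd d, (ε ^ d)⁻¹ * (fun z : Rd d => Ψ ‖z‖) (ε⁻¹ • y) :=
          integral_congr_ae (Eventually.of_forall fun y => hsc y)
      _ = (ε ^ d)⁻¹ * ((ε ^ d) • ∫ y : Rd d, Ψ ‖y‖) := by rw [integral_const_mul, h1]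
      _ = 1 := by rw [hΨ1, smul_eq_mul, mul_one, inv_mul_cancel₀ hεd.ne']
  -- a.e. nonnegativity of k
  have hk_nonneg : ∀ᵐ y : Rd d ∂volume, 0 ≤ k y := by
    have hA : volume ({r : ℝ | ¬ 0 < Ψ r} ∩ Set.Ici 0) = 0 := by
      have := hΨpos
      rw [ae_iff] at this
      rwa [Measure.restrict_apply' measurableSet_Ici] at this
    have hA2 : volume {r : ℝ | r / ε ∈ ({r : ℝ | ¬ 0 < Ψ r} ∩ Set.Ici 0)} = 0 := by
      have : {r : ℝ | r / ε ∈ ({r : ℝ | ¬ 0 < Ψ r} ∩ Set.Ici 0)}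
          = (· * ε⁻¹) ⁻¹' ({r : ℝ | ¬ 0 < Ψ r} ∩ Set.Ici 0) := by
        ext r; simp [div_eq_mul_inv]
      rw [this, Real.volume_preimage_mul_right (inv_ne_zero hε.ne'), hA, mul_zero]
    have hnull := norm_mem_null hd hA2
    rw [ae_iff]
    refine measure_mono_null ?_ hnull
    intro y hy
    simp only [Set.mem_setOf_eq] at hy ⊢
    by_contra hcon
    apply hy
    simp only [hkdef, psiEps]
    have hΨy : 0 < Ψ (‖y‖ / ε) := by
      by_contra hc
      exact hcon ⟨hc, div_nonneg (norm_nonneg y) hε.le⟩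
    positivity
  -- main functions
  set f : Rd d → ℝ := fun x => Vε x - V x with hfdef
  set g : Rd d → ℝ := fun x => ρ0ε x * f x with hgdef
  set hfun : Rd d → ℝ := fun x => ρ0ε x * f x ^ 2 with hhdef
  set q : Rd d → ℝ := fun x => (ρ0 x - ρ0ε x) ^ 2 with hqdef
  have hf_meas : Measurable f := hVεmeas.sub hVmeas
  have hg_meas : Measurable g := hρεmeas.mul hf_meas
  have hh_meas : Measurable hfun := hρεmeas.mul (hf_meas.pow_const 2)
  have hq_meas : Measurable q := (hρ0meas.sub hρεmeas).pow_const 2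
  have hh_nonneg : ∀ x, 0 ≤ hfun x := fun x => mul_nonneg (hρεnn x) (sq_nonneg _)
  -- integrability of h, q, g^2
  have hh_int : Integrable hfun volume := by
    refine Integrable.mono' ((hVεint.const_mul 2).add (hρεint.const_mul (2 * BV ^ 2)))
      hh_meas.aestronglyMeasurable (Eventually.of_forall fun x => ?_)
    rw [Real.norm_eq_abs, abs_of_nonneg (hh_nonneg x)]
    have h1 := hρεnn x
    have h2 := abs_le.1 (hVbdd x)
    have hV2 : V x ^ 2 ≤ BV ^ 2 := by nlinarith [h2.1, h2.2]
    simp only [hhdef, hfdef, Pi.add_apply]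
    nlinarith [mul_nonneg h1 (sq_nonneg (Vε x + V x)), mul_le_mul_of_nonneg_left hV2 h1]
  have hq_int : Integrable q volume := by
    refine Integrable.mono' ((hρ0L2.const_mul 2).add (hρεint.const_mul (2 * Bρ)))
      hq_meas.aestronglyMeasurable (Eventually.of_forall fun x => ?_)
    rw [Real.norm_eq_abs, abs_of_nonneg (sq_nonneg _)]
    have h1 := hρεnn x
    have h2 := hρεbdd x
    simp only [hqdef, Pi.add_apply]
    nlinarith [sq_nonneg (ρ0 x + ρ0ε x), mul_le_mul_of_nonneg_right h2 h1]
  have hg2_int : Integrable (fun x => g x ^ 2) volume := by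
    refine Integrable.mono' (hh_int.const_mul Bρ)
      ((hg_meas.pow_const 2).aestronglyMeasurable) (Eventually.of_forall fun x => ?_)
    rw [Real.norm_eq_abs, abs_of_nonneg (sq_nonneg _)]
    have h1 := hρεnn x
    have h2 := hρεbdd x
    simp only [hgdef, hhdef, Pi.add_apply, smul_eq_mul]
    nlinarith [mul_le_mul_of_nonneg_right (mul_le_mul_of_nonneg_right h2 h1) (sq_nonneg (f x))]
  -- product measure and the two pieces
  set pm : Measure (Rd d × Rd d) := (volume : Measure (Rd d)).prod volume with hpmdef
  set P : Rd d × Rd d → ℝ :=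
    fun p => k (p.1 - p.2) * (g p.1 * g p.2 - hfun p.1 * ρ0ε p.2) with hPdef
  set Q : Rd d × Rd d → ℝ :=
    fun p => k (p.1 - p.2) * (g p.1 * ((ρ0ε p.2 - ρ0 p.2) * (V p.2 - V p.1))) with hQdef
  set F : Rd d × Rd d → ℝ :=
    fun p => k (p.1 - p.2) * ρ0ε p.1 * (Vε p.1 - V p.1)
      * (ρ0ε p.2 * (Vε p.2 - Vε p.1) - ρ0 p.2 * (V p.2 - V p.1)) with hFdef
  have hFPQ : ∀ p, F p = P p + Q p := by
    intro p
    simp only [hFdef, hPdef, hQdef, hgdef, hhdef, hfdef]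
    ring
  have hkS_aesm := kSub_aesm (k := k) hk_int.aestronglyMeasurable
  have hkS_nonneg := kSub_nonneg (k := k) hk_nonneg
  -- integrability of P
  have hDP_int : Integrable (fun p : Rd d × Rd d =>
      k (p.1 - p.2) * ((1/2) * g p.1 ^ 2) + (k (p.1 - p.2) * ((1/2) * g p.2 ^ 2)
        + k (p.1 - p.2) * (Bρ * hfun p.1))) pm := by
    exact ((joint_fst hk_int hke (hg2_int.const_mul (1/2))).add
      ((joint_snd hk_int (hg2_int.const_mul (1/2))).add
        (joint_fst hk_int hke (hh_int.const_mul Bρ))))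
  -- P is integrable
  have hP_aesm : AEStronglyMeasurable P pm := by
    refine hkS_aesm.mul ?_
    exact (((hg_meas.comp measurable_fst).mul (hg_meas.comp measurable_snd)).sub
      ((hh_meas.comp measurable_fst).mul (hρεmeas.comp measurable_snd))).aestronglyMeasurable
  have hP_int : Integrable P pm := by
    refine Integrable.mono' hDP_int hP_aesm ?_
    filter_upwards [hkS_nonneg] with p hp
    simp only [hPdef]
    rw [Real.norm_eq_abs, abs_mul, abs_of_nonneg hp]
    have hb : |g p.1 * g p.2 - hfun p.1 * ρ0ε p.2|
        ≤ (1/2) * g p.1 ^ 2 + ((1/2) * g p.2 ^ 2 + Bρ * hfun p.1) := by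
      have h1 := hh_nonneg p.1
      have h2 := hρεnn p.2
      have h3 := hρεbdd p.2
      rw [abs_le]
      constructor <;>
        nlinarith [sq_nonneg (g p.1 - g p.2), sq_nonneg (g p.1 + g p.2), mul_nonneg h1 h2,
          mul_le_mul_of_nonneg_left h3 h1]
    calc k (p.1 - p.2) * |g p.1 * g p.2 - hfun p.1 * ρ0ε p.2|
        ≤ k (p.1 - p.2) * ((1/2) * g p.1 ^ 2 + ((1/2) * g p.2 ^ 2 + Bρ * hfun p.1)) :=
          mul_le_mul_of_nonneg_left hb hp
      _ = k (p.1 - p.2) * ((1/2) * g p.1 ^ 2) + (k (p.1 - p.2) * ((1/2) * g p.2 ^ 2)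
          + k (p.1 - p.2) * (Bρ * hfun p.1)) := by ring
  -- integrability of Q with explicit dominator
  set DQ : Rd d × Rd d → ℝ := fun p => k (p.1 - p.2) * (BV * ε^2 * hfun p.1)
      + k (p.1 - p.2) * (BV * Bρ * (ε^2)⁻¹ * q p.2) with hDQdef
  have hDQ_int : Integrable DQ pm :=
    (joint_fst hk_int hke (hh_int.const_mul (BV * ε^2))).add
      (joint_snd hk_int (hq_int.const_mul (BV * Bρ * (ε^2)⁻¹)))
  have hQabs : ∀ᵐ p ∂pm, |Q p| ≤ DQ p := by
    filter_upwards [hkS_nonneg] with p hp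
    simp only [hQdef, hDQdef]
    rw [abs_mul, abs_of_nonneg hp, ← mul_add]
    refine mul_le_mul_of_nonneg_left ?_ hp
    have h1 := hρεnn p.1
    have h3 := hρεbdd p.1
    have hVa := abs_le.1 (hVbdd p.1)
    have hVb := abs_le.1 (hVbdd p.2)
    have hW : |V p.2 - V p.1| ≤ 2 * BV := by
      rw [abs_le]; constructor <;> linarith [hVa.1, hVa.2, hVb.1, hVb.2]
    have heq : |g p.1 * ((ρ0ε p.2 - ρ0 p.2) * (V p.2 - V p.1))|
        = ρ0ε p.1 * |f p.1| * (|ρ0ε p.2 - ρ0 p.2| * |V p.2 - V p.1|) := by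
      simp only [hgdef]
      rw [abs_mul, abs_mul, abs_mul, abs_of_nonneg h1]
    rw [heq]
    have step1 : ρ0ε p.1 * |f p.1| * (|ρ0ε p.2 - ρ0 p.2| * |V p.2 - V p.1|)
        ≤ ρ0ε p.1 * |f p.1| * (|ρ0ε p.2 - ρ0 p.2| * (2 * BV)) :=
      mul_le_mul_of_nonneg_left (mul_le_mul_of_nonneg_left hW (abs_nonneg _))
        (mul_nonneg h1 (abs_nonneg _))
    refine step1.trans ?_
    have h4 : ε * ε⁻¹ = 1 := mul_inv_cancel₀ hε.ne'
    have h5 : (ε^2)⁻¹ = ε⁻¹ * ε⁻¹ := by rw [sq, mul_inv]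
    have hg2 : 2 * (|f p.1| * |ρ0ε p.2 - ρ0 p.2|)
        ≤ ε^2 * f p.1 ^ 2 + (ε^2)⁻¹ * (ρ0ε p.2 - ρ0 p.2) ^ 2 := by
      have hexp : (ε * |f p.1| - ε⁻¹ * |ρ0ε p.2 - ρ0 p.2|)^2
          = ε^2 * |f p.1|^2 - 2 * (ε * ε⁻¹) * (|f p.1| * |ρ0ε p.2 - ρ0 p.2|)
            + (ε⁻¹ * ε⁻¹) * |ρ0ε p.2 - ρ0 p.2|^2 := by ring
      have h0 := sq_nonneg (ε * |f p.1| - ε⁻¹ * |ρ0ε p.2 - ρ0 p.2|)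
      rw [hexp, h4, ← h5, sq_abs, sq_abs] at h0
      linarith
    have hqq : q p.2 = (ρ0ε p.2 - ρ0 p.2) ^ 2 := by simp only [hqdef]; ring
    rw [hqq]
    simp only [hhdef]
    nlinarith [mul_le_mul_of_nonneg_left hg2 (mul_nonneg hBV h1),
      mul_le_mul_of_nonneg_right h3 (mul_nonneg (mul_nonneg hBV
        (inv_nonneg.2 (sq_nonneg ε))) (sq_nonneg (ρ0ε p.2 - ρ0 p.2)))]
  have hQ_aesm : AEStronglyMeasurable Q pm := by
    refine hkS_aesm.mul ?_
    exact ((hg_meas.comp measurable_fst).mul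
      (((hρεmeas.comp measurable_snd).sub (hρ0meas.comp measurable_snd)).mul
        ((hVmeas.comp measurable_snd).sub (hVmeas.comp measurable_fst)))).aestronglyMeasurable
  have hQ_int : Integrable Q pm := by
    refine Integrable.mono' hDQ_int hQ_aesm ?_
    filter_upwards [hQabs] with p hp
    rwa [Real.norm_eq_abs]
  -- F is integrable
  have hF_int : Integrable F pm := by
    have hFeq : F = fun p => P p + Q p := funext hFPQ
    rw [hFeq]; exact hP_int.add hQ_int
  -- the iterated integral equals the product integral
  have hiter : (∫ x : Rd d, ∫ x' : Rd d, psiEps d Ψ ε ‖x - x'‖ * ρ0ε x * (Vε x - V x)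
        * (ρ0ε x' * (Vε x' - Vε x) - ρ0 x' * (V x' - V x)))
      = ∫ p : Rd d × Rd d, F p ∂pm :=
    MeasureTheory.integral_integral (f := fun x x' => F (x, x')) hF_int
  -- ∫ P ≤ 0 by symmetrization
  have hP_le : ∫ p, P p ∂pm ≤ 0 := by
    have hswap_int : Integrable (fun z : Rd d × Rd d => P z.swap) pm := hP_int.swap
    have e1 : ∫ p, P p ∂pm = ∫ p : Rd d × Rd d, P p.swap ∂pm :=
      (integral_prod_swap P).symm
    have e2 : ∫ p, P p ∂pm + ∫ p : Rd d × Rd d, P p.swap ∂pm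
        = ∫ p : Rd d × Rd d, (P p + P p.swap) ∂pm :=
      (integral_add hP_int hswap_int).symm
    have e3 : ∫ p : Rd d × Rd d, (P p + P p.swap) ∂pm ≤ 0 := by
      refine integral_nonpos_of_ae ?_
      filter_upwards [hkS_nonneg] with p hp
      simp only [Pi.zero_apply]
      have heq : P p + P p.swap
          = - (k (p.1 - p.2) * (ρ0ε p.1 * ρ0ε p.2 * (f p.1 - f p.2)^2)) := by
        simp only [hPdef, Prod.fst_swap, Prod.snd_swap, hgdef, hhdef]
        rw [show k (p.2 - p.1) = k (p.1 - p.2) from by rw [← neg_sub p.1 p.2, hke]]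
        ring
      rw [heq]
      have hnn : 0 ≤ k (p.1 - p.2) * (ρ0ε p.1 * ρ0ε p.2 * (f p.1 - f p.2)^2) :=
        mul_nonneg hp (mul_nonneg (mul_nonneg (hρεnn _) (hρεnn _)) (sq_nonneg _))
      linarith
    linarith [e1, e2, e3]
  -- ∫ Q is bounded by the two error terms
  have hQ_le : ∫ p, Q p ∂pm
      ≤ BV * ε^2 * (∫ x, hfun x) + BV * Bρ * (ε^2)⁻¹ * (∫ x, q x) := by
    have h1 : ∫ p, Q p ∂pm ≤ ∫ p, DQ p ∂pm := by
      refine integral_mono_ae hQ_int hDQ_int ?_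
      filter_upwards [hQabs] with p hp
      exact (le_abs_self _).trans hp
    have h2 : ∫ p, DQ p ∂pm
        = BV * ε^2 * (∫ x, hfun x) + BV * Bρ * (ε^2)⁻¹ * (∫ x, q x) := by
      rw [hDQdef, integral_add (joint_fst hk_int hke (hh_int.const_mul (BV * ε^2)))
        (joint_snd hk_int (hq_int.const_mul (BV * Bρ * (ε^2)⁻¹)))]
      rw [eval_fst hk_int hk_one hke (hh_int.const_mul (BV * ε^2)),
        eval_snd hk_int hk_one (hq_int.const_mul (BV * Bρ * (ε^2)⁻¹))]
      rw [integral_const_mul, integral_const_mul]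
    linarith [h1, h2.le, h2.ge]
  -- combine
  have htotal : ∫ p, F p ∂pm
      ≤ BV * ε^2 * (∫ x, hfun x) + BV * Bρ * (ε^2)⁻¹ * (∫ x, q x) := by
    have e : ∫ p, F p ∂pm = ∫ p, P p ∂pm + ∫ p, Q p ∂pm := by
      rw [show F = fun p => P p + Q p from funext hFPQ]
      exact integral_add hP_int hQ_int
    rw [e]; linarith
  have hH : (∫ x, hfun x) = ∫ x : Rd d, ρ0ε x * (Vε x - V x) ^ 2 := rfl
  have hq' : (∫ x, q x) = ∫ x : Rd d, (ρ0 x - ρ0ε x) ^ 2 := rfl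
  rw [hiter, ← hH, ← hq']
  calc (ε ^ 2)⁻¹ * (∫ p, F p ∂pm)
      ≤ (ε ^ 2)⁻¹ * (BV * ε^2 * (∫ x, hfun x) + BV * Bρ * (ε^2)⁻¹ * (∫ x, q x)) :=
        mul_le_mul_of_nonneg_left htotal (by positivity)
    _ = 2 * BV * ((1 / 2) * ∫ x, hfun x) + (ε ^ 4)⁻¹ * BV * Bρ * (∫ x, q x) := by
        field_simp
end
end
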